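/- arXiv:1707.06905 — 2 statements merged into one kernel-verified Lean document; each statement's English description precedes it below -/
import Mathlib

section
/- For the elephant random walk at the critical value p = 3/4, E[X_n^2] ~ n log n as n → ∞. -/
open MeasureTheory ProbabilityTheory Filter

/-- `a_n` coefficients of the ERW: `a_1 = 1` and
`a_n = Γ(n + 2p - 1)/(Γ(n) Γ(2p))` for `n ≥ 2`. -/
noncomputable def aERW (p : ℝ) (n : ℕ) : ℝ :=
  if n ≤ 1 then 1 else Real.Gamma ((n : ℝ) + (2 * p - 1)) / (Real.Gamma n * Real.Gamma (2 * p))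

/-- `s_n^2 = q(1-q) + ∑_{j=2}^n a_j^{-2}`. -/
noncomputable def sSqERW (p q : ℝ) (n : ℕ) : ℝ :=
  q * (1 - q) + ∑ j ∈ Finset.Icc 2 n, ((aERW p j)⁻¹) ^ 2

/-- The elephant random walk: a sequence of ±1 increments `η n` (for `n ≥ 1`; we set `η 0 = 0`)
on a probability space, with first step `+1` with probability `q`, and conditional law of
`η_{n+1}` given `η_1, …, η_n` equal to `(1/(2n)) ∑_{k=1}^n (1 + (2p-1) η_k η)`. -/
structure IsERW {Ω : Type*} [MeasurableSpace Ω] (μ : Measure Ω)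
    (p q : ℝ) (η : ℕ → Ω → ℝ) : Prop where
  isProb : IsProbabilityMeasure μ
  p_mem : p ∈ Set.Ioo (0 : ℝ) 1
  q_mem : q ∈ Set.Ioo (0 : ℝ) 1
  meas : ∀ n, Measurable (η n)
  zero : ∀ ω, η 0 ω = 0
  pm_one : ∀ n, 1 ≤ n → ∀ ω, η n ω = 1 ∨ η n ω = -1
  first : μ {ω | η 1 ω = 1} = ENNReal.ofReal q
  cond : ∀ n, 1 ≤ n → ∀ e : ℝ, (e = 1 ∨ e = -1) →
    (μ[Set.indicator {ω | η (n + 1) ω = e} (fun _ => (1 : ℝ)) |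
        MeasurableSpace.comap (fun ω (k : Finset.Icc 1 n) => η k ω) inferInstance])
      =ᵐ[μ] fun ω => (1 / (2 * (n : ℝ))) * ∑ k ∈ Finset.Icc 1 n, (1 + (2 * p - 1) * η k ω * e)

/-- Position of the ERW at time `n`. -/
noncomputable def erwX {Ω : Type*} (η : ℕ → Ω → ℝ) (n : ℕ) (ω : Ω) : ℝ :=
  ∑ k ∈ Finset.Icc 1 n, η k ω

/-- A standard one-dimensional Brownian motion. -/
structure IsStdBM {Ω : Type*} [MeasurableSpace Ω] (μ : Measure Ω) (W : ℝ → Ω → ℝ) : Prop where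
  isProb : IsProbabilityMeasure μ
  meas : ∀ t, Measurable (W t)
  init : ∀ᵐ ω ∂μ, W 0 ω = 0
  indep_incr : ∀ (n : ℕ) (t : ℕ → ℝ), Monotone t → 0 ≤ t 0 →
    iIndepFun
      (fun i : Fin n => fun ω => W (t (i + 1)) ω - W (t i) ω) μ
  gauss_incr : ∀ s t : ℝ, 0 ≤ s → s ≤ t →
    Measure.map (fun ω => W t ω - W s ω) μ = gaussianReal 0 (Real.toNNReal (t - s))
  cont : ∀ᵐ ω ∂μ, Continuous fun t => W t ω

section aux
variable {Ω : Type*} [MeasurableSpace Ω] {μ : Measure Ω} {q : ℝ} {η : ℕ → Ω → ℝ}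

lemma erw_abs_le (h : IsERW μ (3/4) q η) (k : ℕ) (ω : Ω) : |η k ω| ≤ 1 := by
  rcases Nat.eq_zero_or_pos k with hk | hk
  · simp [hk, h.zero ω]
  · rcases h.pm_one k hk ω with h1 | h1 <;> simp [h1]

lemma erw_integrable_of_bound (h : IsERW μ (3/4) q η) {f : Ω → ℝ} (hf : Measurable f)
    (C : ℝ) (hC : ∀ ω, |f ω| ≤ C) : Integrable f μ := by
  have := h.isProb
  exact (integrable_const C).mono' hf.aestronglyMeasurable
    (Eventually.of_forall fun ω => by simpa using hC ω)

lemma erwX_meas (h : IsERW μ (3/4) q η) (n : ℕ) : Measurable (erwX η n) := by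
  unfold erwX; exact Finset.measurable_sum _ fun k _ => h.meas k

lemma erwX_abs_le (h : IsERW μ (3/4) q η) (n : ℕ) (ω : Ω) : |erwX η n ω| ≤ n := by
  unfold erwX
  calc |∑ k ∈ Finset.Icc 1 n, η k ω| ≤ ∑ k ∈ Finset.Icc 1 n, |η k ω| :=
        Finset.abs_sum_le_sum_abs _ _
    _ ≤ ∑ k ∈ Finset.Icc 1 n, 1 := Finset.sum_le_sum fun k _ => erw_abs_le h k ω
    _ ≤ n := by simp [Nat.card_Icc]

end aux

section aux2
variable {Ω : Type*} [MeasurableSpace Ω] {μ : Measure Ω} {q : ℝ} {η : ℕ → Ω → ℝ}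

/-- The filtration σ-algebra. -/
def erwF (η : ℕ → Ω → ℝ) (n : ℕ) : MeasurableSpace Ω :=
  MeasurableSpace.comap (fun ω (k : Finset.Icc 1 n) => η k ω) inferInstance

lemma erwF_le (h : IsERW μ (3/4) q η) (n : ℕ) : erwF η n ≤ ‹MeasurableSpace Ω› := by
  refine Measurable.comap_le (measurable_pi_lambda _ fun k => h.meas k)

lemma erwX_sm (h : IsERW μ (3/4) q η) (n : ℕ) :
    StronglyMeasurable[erwF η n] (erwX η n) := by
  have : ∀ k ∈ Finset.Icc 1 n, Measurable[erwF η n] (η k) := by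
    intro k hk
    have : η k = (fun v : (Finset.Icc 1 n → ℝ) => v ⟨k, hk⟩) ∘
        (fun ω (j : Finset.Icc 1 n) => η j ω) := rfl
    rw [this]
    exact (measurable_pi_apply _).comp (Measurable.of_comap_le le_rfl)
  exact (Finset.measurable_sum _ this).stronglyMeasurable

lemma erw_condexp (h : IsERW μ (3/4) q η) (n : ℕ) (hn : 1 ≤ n) :
    μ[η (n+1) | erwF η n] =ᵐ[μ] fun ω => erwX η n ω / (2 * n) := by
  have := h.isProb
  set A := {ω | η (n+1) ω = 1}
  set B := {ω | η (n+1) ω = -1}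
  have hA : MeasurableSet A := (h.meas (n+1)) (measurableSet_singleton 1)
  have hB : MeasurableSet B := (h.meas (n+1)) (measurableSet_singleton (-1))
  have hdecomp : η (n+1) = (A.indicator (fun _ => (1:ℝ))) - (B.indicator (fun _ => (1:ℝ))) := by
    funext ω
    rcases h.pm_one (n+1) (by omega) ω with h1 | h1 <;>
      simp [A, B, Set.indicator_apply, Set.mem_setOf_eq, h1] <;> norm_num
  have hiA : Integrable (A.indicator (fun _ => (1:ℝ))) μ :=
    (integrable_const (1:ℝ)).indicator hA
  have hiB : Integrable (B.indicator (fun _ => (1:ℝ))) μ :=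
    (integrable_const (1:ℝ)).indicator hB
  have h1 : μ[A.indicator (fun _ => (1:ℝ)) | erwF η n] =ᵐ[μ]
      fun ω => (1 / (2 * (n:ℝ))) * ∑ k ∈ Finset.Icc 1 n, (1 + (2 * (3/4) - 1) * η k ω * 1) :=
    h.cond n hn 1 (Or.inl rfl)
  have h2 : μ[B.indicator (fun _ => (1:ℝ)) | erwF η n] =ᵐ[μ]
      fun ω => (1 / (2 * (n:ℝ))) * ∑ k ∈ Finset.Icc 1 n, (1 + (2 * (3/4) - 1) * η k ω * (-1)) :=
    h.cond n hn (-1) (Or.inr rfl)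
  calc μ[η (n+1) | erwF η n]
      =ᵐ[μ] μ[A.indicator (fun _ => (1:ℝ)) | erwF η n]
          - μ[B.indicator (fun _ => (1:ℝ)) | erwF η n] := by
        rw [hdecomp]; exact condExp_sub hiA hiB _
    _ =ᵐ[μ] fun ω => erwX η n ω / (2 * n) := by
        filter_upwards [h1, h2] with ω hω1 hω2
        simp only [Pi.sub_apply]
        rw [hω1, hω2, ← mul_sub, ← Finset.sum_sub_distrib]
        unfold erwX
        rw [one_div_mul_eq_div]
        congr 1
        refine Finset.sum_congr rfl fun k _ => ?_
        ring

end aux2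

section aux3
variable {Ω : Type*} [MeasurableSpace Ω] {μ : Measure Ω} {q : ℝ} {η : ℕ → Ω → ℝ}

lemma erw_int_sq (h : IsERW μ (3/4) q η) (n : ℕ) :
    Integrable (fun ω => (erwX η n ω)^2) μ :=
  erw_integrable_of_bound h ((erwX_meas h n).pow_const 2) ((n:ℝ)^2) (fun ω => by
    rw [abs_pow]
    exact pow_le_pow_left₀ (abs_nonneg _) (erwX_abs_le h n ω) 2)

lemma erw_int_mul (h : IsERW μ (3/4) q η) (n : ℕ) :
    Integrable (erwX η n * η (n+1)) μ :=
  erw_integrable_of_bound h ((erwX_meas h n).mul (h.meas _)) n (fun ω => by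
    calc |erwX η n ω * η (n+1) ω| = |erwX η n ω| * |η (n+1) ω| := abs_mul _ _
      _ ≤ n * 1 := mul_le_mul (erwX_abs_le h n ω) (erw_abs_le h _ ω) (abs_nonneg _)
          (n.cast_nonneg)
      _ = n := mul_one _)

lemma erw_key (h : IsERW μ (3/4) q η) (n : ℕ) (hn : 1 ≤ n) :
    ∫ ω, erwX η n ω * η (n+1) ω ∂μ = (∫ ω, (erwX η n ω)^2 ∂μ) / (2 * n) := by
  have := h.isProb
  have hm := erwF_le h n
  have hfg := erw_int_mul h n
  have hg : Integrable (η (n+1)) μ := erw_integrable_of_bound h (h.meas _) 1 (erw_abs_le h _)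
  have hpull := condExp_mul_of_stronglyMeasurable_left (erwX_sm h n) hfg hg
  calc ∫ ω, erwX η n ω * η (n+1) ω ∂μ
      = ∫ ω, (μ[erwX η n * η (n+1) | erwF η n]) ω ∂μ := (integral_condExp hm).symm
    _ = ∫ ω, erwX η n ω * (μ[η (n+1) | erwF η n]) ω ∂μ := integral_congr_ae hpull
    _ = ∫ ω, (erwX η n ω)^2 / (2 * n) ∂μ := by
        refine integral_congr_ae ?_
        filter_upwards [erw_condexp h n hn] with ω hω
        rw [hω]; ring
    _ = (∫ ω, (erwX η n ω)^2 ∂μ) / (2 * n) := integral_div _ _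

lemma erw_sq_eq (h : IsERW μ (3/4) q η) : ∀ n, 1 ≤ n →
    ∫ ω, (erwX η n ω)^2 ∂μ = n * (harmonic n : ℝ) := by
  have := h.isProb
  intro n hn
  induction n, hn using Nat.le_induction with
  | base =>
    have : ∀ ω, (erwX η 1 ω)^2 = 1 := by
      intro ω
      have : erwX η 1 ω = η 1 ω := by unfold erwX; simp
      rw [this]
      rcases h.pm_one 1 le_rfl ω with h1 | h1 <;> rw [h1] <;> norm_num
    simp [this, harmonic_succ]
  | succ n hn ih =>
    have hstep : ∀ ω, (erwX η (n+1) ω)^2 =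
        (erwX η n ω)^2 + 2 * (erwX η n ω * η (n+1) ω) + 1 := by
      intro ω
      have h1 : erwX η (n+1) ω = erwX η n ω + η (n+1) ω := by
        unfold erwX; rw [Finset.sum_Icc_succ_top (by omega : 1 ≤ n + 1)]
      have h2 : (η (n+1) ω)^2 = 1 := by
        rcases h.pm_one (n+1) (by omega) ω with h1 | h1 <;> rw [h1] <;> norm_num
      rw [h1]; nlinarith [h2]
    have hint2 : Integrable (fun ω => 2 * (erwX η n ω * η (n+1) ω)) μ :=
      (erw_int_mul h n).const_mul 2
    calc ∫ ω, (erwX η (n+1) ω)^2 ∂μ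
        = ∫ ω, ((erwX η n ω)^2 + 2 * (erwX η n ω * η (n+1) ω) + 1) ∂μ := by
          exact integral_congr_ae (Eventually.of_forall fun ω => hstep ω)
      _ = (∫ ω, (erwX η n ω)^2 ∂μ) + 2 * (∫ ω, erwX η n ω * η (n+1) ω ∂μ) + 1 := by
          have hI : Integrable (fun ω => erwX η n ω ^ 2 + 2 * (erwX η n ω * η (n + 1) ω)) μ :=
            (erw_int_sq h n).add hint2
          rw [integral_add hI (integrable_const 1), integral_add (erw_int_sq h n) hint2,
            integral_const, integral_const_mul]
          simp
      _ = (n+1 : ℕ) * (harmonic (n+1) : ℝ) := by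
          rw [erw_key h n hn, ih, harmonic_succ]
          have hn0 : (n : ℝ) ≠ 0 := by positivity
          push_cast
          field_simp

end aux3
/-- critical case `p = 3/4`, `E[X_n^2] ~ n log n`. -/

theorem erw_second_moment_critical {Ω : Type*} [MeasurableSpace Ω] {μ : Measure Ω}
    {q : ℝ} {η : ℕ → Ω → ℝ} (h : IsERW μ (3 / 4) q η) :
    Tendsto (fun n : ℕ => (∫ ω, (erwX η n ω) ^ 2 ∂μ) / ((n : ℝ) * Real.log n))
      atTop (nhds 1) := by
  have hlog : Tendsto (fun n : ℕ => Real.log n) atTop atTop :=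
    Real.tendsto_log_atTop.comp tendsto_natCast_atTop_atTop
  have hmain : Tendsto (fun n : ℕ => (harmonic n : ℝ) / Real.log n) atTop (nhds 1) := by
    have h1 : Tendsto (fun n : ℕ => ((harmonic n : ℝ) - Real.log n) * (Real.log n)⁻¹ + 1)
        atTop (nhds (Real.eulerMascheroniConstant * 0 + 1)) :=
      (Real.tendsto_harmonic_sub_log.mul (tendsto_inv_atTop_zero.comp hlog)).add
        tendsto_const_nhds
    rw [mul_zero, zero_add] at h1
    refine h1.congr' ?_
    filter_upwards [hlog.eventually_gt_atTop 0] with n hn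
    have hne : Real.log n ≠ 0 := ne_of_gt hn
    field_simp
    ring
  refine Tendsto.congr' ?_ hmain
  filter_upwards [eventually_ge_atTop 1] with n hn
  rw [erw_sq_eq h n hn]
  have hne : (n : ℝ) ≠ 0 := by positivity
  rw [mul_div_mul_left _ _ hne]
end

section
/- For p ≤ 3/4, the series Σ_{j=1}^∞ 1/(a_j^4 s_j^4) converges, where a_j = Γ(j + 2p - 1)/(Γ(j)Γ(2p)) and s_j^2 = q(1-q) + Σ_{i=2}^j a_i^{-2}. -/
open MeasureTheory ProbabilityTheory Filter

lemma aERW_pos {p : ℝ} (hp : 0 < p) (n : ℕ) : 0 < aERW p n := by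
  unfold aERW
  split
  · norm_num
  · rename_i h
    push_neg at h
    have hn : (2 : ℝ) ≤ (n : ℝ) := by exact_mod_cast h
    apply div_pos
    · exact Real.Gamma_pos_of_pos (by linarith)
    · exact mul_pos (Real.Gamma_pos_of_pos (by linarith)) (Real.Gamma_pos_of_pos (by linarith))

lemma aERW_succ {p : ℝ} (hp : 0 < p) (n : ℕ) (hn : 1 ≤ n) :
    aERW p (n + 1) = aERW p n * (((n : ℝ) + 2 * p - 1) / n) := by
  have hΓp : Real.Gamma (2 * p) ≠ 0 := (Real.Gamma_pos_of_pos (by linarith)).ne'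
  rcases eq_or_lt_of_le hn with h1 | h2
  · subst h1
    simp only [aERW]
    norm_num
    rw [show (2:ℝ) + (2*p-1) = 2*p+1 by ring, Real.Gamma_add_one (by linarith)]
    field_simp
  · have h2' : 2 ≤ n := h2
    have hn0 : (n : ℝ) ≠ 0 := by positivity
    have hΓn : Real.Gamma (n : ℝ) ≠ 0 := (Real.Gamma_pos_of_pos (by positivity)).ne'
    have hnc : (2 : ℝ) ≤ (n : ℝ) := by exact_mod_cast h2'
    simp only [aERW, if_neg (by omega : ¬ n + 1 ≤ 1), if_neg (by omega : ¬ n ≤ 1)]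
    have e1 : ((n + 1 : ℕ) : ℝ) + (2 * p - 1) = ((n : ℝ) + (2 * p - 1)) + 1 := by
      push_cast; ring
    have e2 : ((n + 1 : ℕ) : ℝ) = (n : ℝ) + 1 := by push_cast; ring
    rw [e1, e2, Real.Gamma_add_one (by nlinarith), Real.Gamma_add_one hn0]
    field_simp
    ring

lemma aERW_mul_mono {p : ℝ} (hp : 0 < p) {i j : ℕ} (hi : 2 ≤ i) (hij : i ≤ j) :
    ((i : ℝ) - 1) * aERW p i ≤ ((j : ℝ) - 1) * aERW p j := by
  induction j, hij using Nat.le_induction with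
  | base => exact le_rfl
  | succ j hj ih =>
    have hj2 : 2 ≤ j := le_trans hi hj
    have hjc : (2 : ℝ) ≤ (j : ℝ) := by exact_mod_cast hj2
    have ha := aERW_pos hp j
    have hc : ((j + 1 : ℕ) : ℝ) - 1 = (j : ℝ) := by push_cast; ring
    rw [hc, aERW_succ hp j (by omega)]
    have e : (j:ℝ) * (aERW p j * (((j:ℝ)+2*p-1)/(j:ℝ))) = aERW p j * ((j:ℝ)+2*p-1) := by
      field_simp
    rw [e]
    nlinarith

lemma sum_sq_lb (j : ℕ) (hj : 2 ≤ j) :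
    ((j : ℝ) - 1) ^ 3 / 3 ≤ ∑ i ∈ Finset.Icc 2 j, ((i : ℝ) - 1) ^ 2 := by
  induction j, hj using Nat.le_induction with
  | base => norm_num
  | succ j hj ih =>
    rw [Finset.sum_Icc_succ_top (by omega : 2 ≤ j + 1)]
    have hjc : (2 : ℝ) ≤ (j : ℝ) := by exact_mod_cast hj
    push_cast
    nlinarith


set_option maxHeartbeats 1000000 in
/-- `∑_j 1/(a_j^4 s_j^4) < ∞` for `p ≤ 3/4`. -/
theorem summable_inv_a_pow_four_mul_s_pow_four {p q : ℝ} (hp : p ∈ Set.Ioo (0 : ℝ) 1)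
    (hp' : p ≤ 3 / 4) (hq : q ∈ Set.Ioo (0 : ℝ) 1) :
    Summable (fun j : ℕ => 1 / (aERW p j ^ 4 * sSqERW p q j ^ 2)) := by
  obtain ⟨hp0, hp1⟩ := hp
  obtain ⟨hq0, hq1⟩ := hq
  have hqq : 0 < q * (1 - q) := mul_pos hq0 (by linarith)
  have key : ∀ j : ℕ, 2 ≤ j → ((j : ℝ) - 1) ^ 2 / 9 ≤ aERW p j ^ 4 * sSqERW p q j ^ 2 := by
    intro j hj
    have hjc : (2 : ℝ) ≤ (j : ℝ) := by exact_mod_cast hj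
    have haj := aERW_pos hp0 j
    have haj' : aERW p j ≠ 0 := haj.ne'
    have hj1 : (0:ℝ) < (j:ℝ) - 1 := by linarith
    have hbound : ((j : ℝ) - 1) / (3 * aERW p j ^ 2) ≤ sSqERW p q j := by
      have hsum : ∀ i ∈ Finset.Icc 2 j,
          ((i : ℝ) - 1) ^ 2 / (((j : ℝ) - 1) ^ 2 * aERW p j ^ 2) ≤ ((aERW p i)⁻¹) ^ 2 := by
        intro i hi
        simp only [Finset.mem_Icc] at hi
        have hic : (2 : ℝ) ≤ (i : ℝ) := by exact_mod_cast hi.1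
        have hai := aERW_pos hp0 i
        have hm := aERW_mul_mono hp0 hi.1 hi.2
        rw [div_le_iff₀ (mul_pos (pow_pos hj1 2) (pow_pos haj 2)), inv_pow, inv_mul_eq_div,
          le_div_iff₀ (pow_pos hai 2)]
        have hx : (0:ℝ) ≤ ((i:ℝ)-1) * aERW p i := mul_nonneg (by linarith) hai.le
        have hsq := mul_self_le_mul_self hx hm
        nlinarith
      have h1 := Finset.sum_le_sum hsum
      rw [← Finset.sum_div] at h1
      have h2 := sum_sq_lb j hj
      have h3 : ((j:ℝ)-1)^3/3 / (((j : ℝ) - 1) ^ 2 * aERW p j ^ 2)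
          = ((j : ℝ) - 1) / (3 * aERW p j ^ 2) := by
        field_simp
      have h4 : ((j:ℝ)-1)^3/3 / (((j : ℝ) - 1) ^ 2 * aERW p j ^ 2)
          ≤ (∑ i ∈ Finset.Icc 2 j, ((i : ℝ) - 1) ^ 2) / (((j : ℝ) - 1) ^ 2 * aERW p j ^ 2) := by
        gcongr
      unfold sSqERW
      rw [h3] at h4
      linarith
    have hnn : 0 ≤ ((j:ℝ)-1)/(3*aERW p j^2) := by positivity
    have h5 : (((j:ℝ)-1)/(3*aERW p j^2))^2 ≤ sSqERW p q j ^ 2 := pow_le_pow_left₀ hnn hbound 2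
    calc ((j:ℝ)-1)^2/9 = aERW p j ^4 * (((j:ℝ)-1)/(3*aERW p j^2))^2 := by
          field_simp; ring
      _ ≤ aERW p j ^4 * sSqERW p q j ^2 := by
          exact mul_le_mul_of_nonneg_left h5 (by positivity)
  rw [← summable_nat_add_iff 2]
  have hsummg : Summable (fun n : ℕ => 9 / ((n:ℝ)+1)^2) := by
    have h0 : Summable (fun n : ℕ => 9 * (1/(n:ℝ)^2)) :=
      (Real.summable_one_div_nat_pow.mpr one_lt_two).mul_left 9
    have h0' := (summable_nat_add_iff 1).mpr h0
    apply h0'.congr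
    intro n
    push_cast
    ring
  refine Summable.of_nonneg_of_le (fun n => by positivity) (fun n => ?_) hsummg
  have hk := key (n+2) (by omega)
  have hc : ((n+2:ℕ):ℝ) - 1 = (n:ℝ)+1 := by push_cast; ring
  rw [hc] at hk
  have h9 : (0:ℝ) < ((n:ℝ)+1)^2/9 := by positivity
  calc 1/(aERW p (n+2)^4 * sSqERW p q (n+2)^2) ≤ 1/(((n:ℝ)+1)^2/9) :=
        one_div_le_one_div_of_le h9 hk
    _ = 9/((n:ℝ)+1)^2 := by rw [one_div_div]
end
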